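/- Let p(t) be a nonnegative classical solution of the L = 2 mean-field system with β = 0 and λ > 0, with conserved density of empty houses (2 p_{0,0}(t) + p_{0,1}(t) + p_{1,0}(t))/2 = 1 - ρ₊ - ρ₋ for all t ≥ 0, where ρ₊ + ρ₋ < 1. Then p_{1,1}(t) ≤ p_{1,1}(0) · exp(-(1 - ρ₊ - ρ₋) λ t) for all t ≥ 0. -/

import Mathlib

/-- For the L = 2 system with β = 0 and λ > 0, the mixed-neighborhood fraction
p₁₁ decays exponentially: local segregation. -/
theorem stmt_1
    (lam ρp ρm : ℝ) (hlam : 0 < lam) (hρ : ρp + ρm < 1)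
    (p00 p10 p01 p20 p02 p11 : ℝ → ℝ)
    (hnn : ∀ t ≥ (0:ℝ), 0 ≤ p00 t ∧ 0 ≤ p10 t ∧ 0 ≤ p01 t ∧ 0 ≤ p20 t ∧ 0 ≤ p02 t ∧ 0 ≤ p11 t)
    (h00 : ∀ t ≥ (0:ℝ), HasDerivAt p00 (-2*lam*(p00 t)*(p11 t)) t)
    (h10 : ∀ t ≥ (0:ℝ), HasDerivAt p10 (lam*(2*p00 t + (p01 t - p10 t)/2)*(p11 t)) t)
    (h01 : ∀ t ≥ (0:ℝ), HasDerivAt p01 (lam*(2*p00 t + (p10 t - p01 t)/2)*(p11 t)) t)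
    (h20 : ∀ t ≥ (0:ℝ), HasDerivAt p20 ((lam/2)*(p10 t)*(p11 t)) t)
    (h02 : ∀ t ≥ (0:ℝ), HasDerivAt p02 ((lam/2)*(p01 t)*(p11 t)) t)
    (h11 : ∀ t ≥ (0:ℝ), HasDerivAt p11
      (-lam*(2*p00 t + (p10 t + p01 t)/2)*(p11 t)) t)
    (hcons : ∀ t ≥ (0:ℝ), (2*p00 t + p01 t + p10 t)/2 = 1 - ρp - ρm) :
    ∀ t ≥ (0:ℝ), p11 t ≤ p11 0 * Real.exp (-(1 - ρp - ρm) * lam * t) := by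
  set c : ℝ := (1 - ρp - ρm) * lam with hc
  have hcpos : 0 < c := mul_pos (by linarith) hlam
  set g : ℝ → ℝ := fun t => p11 t * Real.exp (c * t) with hg
  -- g has nonpositive derivative on [0,∞)
  have hgderiv : ∀ t ≥ (0:ℝ), HasDerivAt g
      ((-lam*(2*p00 t + (p10 t + p01 t)/2)*(p11 t) + c * p11 t) * Real.exp (c * t)) t := by
    intro t ht
    have he : HasDerivAt (fun s => Real.exp (c*s)) (Real.exp (c*t) * c) t := by
      simpa [Function.comp_def] using (Real.hasDerivAt_exp (c*t)).comp t ((hasDerivAt_id t).const_mul c)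
    have h1 := (h11 t ht).mul he
    exact h1.congr_deriv (by ring)
  have hderiv_nonpos : ∀ t ∈ interior (Set.Ici (0:ℝ)),
      deriv g t ≤ 0 := by
    intro t ht
    rw [interior_Ici] at ht
    have ht' : (0:ℝ) ≤ t := le_of_lt ht
    rw [(hgderiv t ht').deriv]
    have hp11 : 0 ≤ p11 t := (hnn t ht').2.2.2.2.2
    have hp00 : 0 ≤ p00 t := (hnn t ht').1
    have hco : 1 - ρp - ρm ≤ 2*p00 t + (p10 t + p01 t)/2 := by
      have := hcons t ht'
      linarith
    have key : -lam*(2*p00 t + (p10 t + p01 t)/2)*(p11 t) + c * p11 t ≤ 0 := by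
      have : c * p11 t ≤ lam*(2*p00 t + (p10 t + p01 t)/2)*(p11 t) := by
        apply mul_le_mul_of_nonneg_right _ hp11
        rw [hc, mul_comm (1 - ρp - ρm) lam]
        exact mul_le_mul_of_nonneg_left hco hlam.le
      linarith
    exact mul_nonpos_of_nonpos_of_nonneg key (Real.exp_pos _).le
  have hcont : ContinuousOn g (Set.Ici 0) := fun t ht =>
    ((hgderiv t ht).continuousAt).continuousWithinAt
  have hdiff : DifferentiableOn ℝ g (interior (Set.Ici (0:ℝ))) := by
    intro t ht
    rw [interior_Ici] at ht
    exact ((hgderiv t ht.le).differentiableAt).differentiableWithinAt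
  have hanti : AntitoneOn g (Set.Ici 0) :=
    antitoneOn_of_deriv_nonpos (convex_Ici 0) hcont hdiff hderiv_nonpos
  intro t ht
  have := hanti (Set.self_mem_Ici) ht ht
  simp only [hg, mul_zero, Real.exp_zero, mul_one] at this
  have hexp : (0:ℝ) < Real.exp (c * t) := Real.exp_pos _
  have h2 : p11 t ≤ p11 0 / Real.exp (c * t) := by
    rw [le_div_iff₀ hexp]; exact this
  calc p11 t ≤ p11 0 / Real.exp (c * t) := h2
    _ = p11 0 * Real.exp (-(1 - ρp - ρm) * lam * t) := by
        rw [div_eq_mul_inv, ← Real.exp_neg, hc]; ring_nf
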